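/- For every pointed uncertainty map M,s and every star-free EPDL formula φ, M,s ⊨ φ if and only if M,s ⊩ φ, where ⊩ denotes the context-dependent semantics with the empty context (M,s ⊩ φ iff M,s ⊩_ε φ). -/
import Mathlib


mutual
/-- Formulas of the star-free fragment EPDL⁻. -/
inductive SFForm (P A : Type) : Type
  | top : SFForm P A
  | atom : P → SFForm P A
  | neg : SFForm P A → SFForm P A
  | and : SFForm P A → SFForm P A → SFForm P A
  | box : SFProg P A → SFForm P A → SFForm P A
  | know : SFForm P A → SFForm P A
/-- Star-free programs. -/
inductive SFProg (P A : Type) : Type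
  | act : A → SFProg P A
  | test : SFForm P A → SFProg P A
  | seq : SFProg P A → SFProg P A → SFProg P A
  | choice : SFProg P A → SFProg P A → SFProg P A
end

/-- A step of a computation sequence: an action or a test. -/
inductive SFStep (P A : Type) : Type
  | act : A → SFStep P A
  | test : SFForm P A → SFStep P A

mutual
def sizeF {P A : Type} : SFForm P A → ℕ
  | .top => 1
  | .atom _ => 1
  | .neg φ => sizeF φ + 1
  | .and φ ψ => sizeF φ + sizeF ψ + 1
  | .box π φ => sizeP π + sizeF φ + 1
  | .know φ => sizeF φ + 1
def sizeP {P A : Type} : SFProg P A → ℕ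
  | .act _ => 1
  | .test φ => sizeF φ + 1
  | .seq π π' => sizeP π + sizeP π' + 1
  | .choice π π' => sizeP π + sizeP π' + 1
end

def sizeStep {P A : Type} : SFStep P A → ℕ
  | .act _ => 1
  | .test φ => sizeF φ + 1

def sizeW {P A : Type} (ω : List (SFStep P A)) : ℕ := (ω.map sizeStep).sum

/-- L(π): the set of computation sequences of π. -/
def Lang {P A : Type} : SFProg P A → Set (List (SFStep P A))
  | .act a => {[SFStep.act a]}
  | .test φ => {[SFStep.test φ]}
  | .seq π π' => {ω | ∃ u ∈ Lang π, ∃ v ∈ Lang π', ω = u ++ v}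
  | .choice π π' => Lang π ∪ Lang π'

/-- r(ω): the sequence of actions obtained by deleting all tests from ω. -/
def rActs {P A : Type} (ω : List (SFStep P A)) : List A :=
  ω.filterMap fun st => match st with | .act a => some a | .test _ => none

theorem lang_size {P A : Type} : ∀ (π : SFProg P A) (ω : List (SFStep P A)),
    ω ∈ Lang π → sizeW ω ≤ sizeP π
  | .act a, ω, hω => by
      simp only [Lang, Set.mem_singleton_iff] at hω
      subst hω
      simp [sizeW, sizeStep, sizeP]
  | .test φ, ω, hω => by
      simp only [Lang, Set.mem_singleton_iff] at hω
      subst hω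
      simp [sizeW, sizeStep, sizeP]
  | .seq π π', ω, hω => by
      simp only [Lang, Set.mem_setOf_eq] at hω
      obtain ⟨u, hu, v, hv, rfl⟩ := hω
      have h1 := lang_size π u hu
      have h2 := lang_size π' v hv
      simp only [sizeW, List.map_append, List.sum_append] at *
      simp only [sizeP]
      omega
  | .choice π π', ω, hω => by
      simp only [Lang, Set.mem_union] at hω
      rcases hω with h | h
      · have := lang_size π ω h; simp only [sizeP]; omega
      · have := lang_size π' ω h; simp only [sizeP]; omega

theorem sizeF_pos {P A : Type} (φ : SFForm P A) : 1 ≤ sizeF φ := by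
  cases φ <;> simp [sizeF]

theorem sizeP_pos {P A : Type} (π : SFProg P A) : 1 ≤ sizeP π := by
  cases π <;> simp [sizeP]

/-- A Kripke model with labelled relations. -/
structure Kripke (P A : Type) where
  S : Type
  R : A → S → S → Prop
  V : S → P → Prop

namespace Kripke
variable {P A : Type}
/-- U|^a -/
def img (N : Kripke P A) (a : A) (U : Set N.S) : Set N.S := {t | ∃ u ∈ U, N.R a u t}
/-- Iterated update U|^σ along a sequence of actions. -/
def updU (N : Kripke P A) : Set N.S → List A → Set N.S
  | U, [] => U
  | U, a :: σ => N.updU (N.img a U) σ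
end Kripke

mutual
/-- Standard semantics of EPDL⁻ at a pointed uncertainty map (over a fixed
Kripke model `N`, given by an uncertainty set and a state). -/
def sfSat {P A : Type} (N : Kripke P A) : Set N.S → N.S → SFForm P A → Prop
  | _, _, .top => True
  | _, s, .atom p => N.V s p
  | U, s, .neg φ => ¬ sfSat N U s φ
  | U, s, .and φ ψ => sfSat N U s φ ∧ sfSat N U s ψ
  | U, s, .box π φ => ∀ c : Set N.S × N.S, sfRel N π (U, s) c → sfSat N c.1 c.2 φ
  | U, _, .know φ => ∀ u ∈ U, sfSat N U u φ
/-- The relation ⟦π⟧ between pointed uncertainty maps. -/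
def sfRel {P A : Type} (N : Kripke P A) : SFProg P A → Set N.S × N.S → Set N.S × N.S → Prop
  | .act a, c, c' => c'.1 = N.img a c.1 ∧ N.R a c.2 c'.2
  | .test ψ, c, c' => c' = c ∧ sfSat N c.1 c.2 ψ
  | .seq π₁ π₂, c, c' => ∃ d, sfRel N π₁ c d ∧ sfRel N π₂ d c'
  | .choice π₁ π₂, c, c' => sfRel N π₁ c c' ∨ sfRel N π₂ c c'
end

mutual
/-- Context-dependent semantics M,s ⊩_σ φ: `U` is the initial uncertainty set of
the uncertainty map M, `σ` records the actions executed so far. -/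
def cSat {P A : Type} (N : Kripke P A) (U : Set N.S) : List A → N.S → SFForm P A → Prop
  | _, _, .top => True
  | _, s, .atom p => N.V s p
  | σ, s, .neg φ => ¬ cSat N U σ s φ
  | σ, s, .and φ ψ => cSat N U σ s φ ∧ cSat N U σ s ψ
  | σ, _, .know φ => ∀ v ∈ N.updU U σ, cSat N U σ v φ
  | σ, s, .box π φ => ∀ ω : List (SFStep P A), ω ∈ Lang π →
      ∀ t : N.S, cRel N U ω σ s t → cSat N U (σ ++ rActs ω) t φ
termination_by σ s φ => sizeF φ
decreasing_by
  · simp only [sizeF]; omega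
  · simp only [sizeF]; omega
  · simp only [sizeF]; omega
  · simp only [sizeF]; omega
  · have h1 := lang_size π ω (by assumption)
    have h2 := sizeF_pos φ
    simp only [sizeF]; omega
  · have h2 := sizeP_pos π
    simp only [sizeF]; omega

/-- The context-dependent relation s →_{ω_σ} t. -/
def cRel {P A : Type} (N : Kripke P A) (U : Set N.S) : List (SFStep P A) → List A → N.S → N.S → Prop
  | [], _, s, t => s = t
  | .act a :: ω, σ, s, t => ∃ s', N.R a s s' ∧ cRel N U ω (σ ++ [a]) s' t
  | .test φ :: ω, σ, s, t => cSat N U σ s φ ∧ cRel N U ω σ s t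
termination_by ω σ s t => sizeW ω
decreasing_by
  · simp only [sizeW, sizeStep, List.map_cons, List.sum_cons]; omega
  · simp only [sizeW, sizeStep, List.map_cons, List.sum_cons]; omega
  · simp only [sizeW, sizeStep, List.map_cons, List.sum_cons]; omega
end

theorem updU_append {P A : Type} (N : Kripke P A) :
    ∀ (σ τ : List A) (U : Set N.S), N.updU U (σ ++ τ) = N.updU (N.updU U σ) τ
  | [], τ, U => rfl
  | a :: σ, τ, U => by
      simp only [List.cons_append, Kripke.updU]
      exact updU_append N σ τ (N.img a U)

/-- Step-sequence version of sfRel. -/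
def sfRelW {P A : Type} (N : Kripke P A) :
    List (SFStep P A) → Set N.S × N.S → Set N.S × N.S → Prop
  | [], c, c' => c' = c
  | .act a :: ω, c, c' => ∃ d, (d.1 = N.img a c.1 ∧ N.R a c.2 d.2) ∧ sfRelW N ω d c'
  | .test ψ :: ω, c, c' => sfSat N c.1 c.2 ψ ∧ sfRelW N ω c c'

theorem sfRelW_append {P A : Type} (N : Kripke P A) :
    ∀ (u v : List (SFStep P A)) (c c' : Set N.S × N.S),
    sfRelW N (u ++ v) c c' ↔ ∃ d, sfRelW N u c d ∧ sfRelW N v d c'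
  | [], v, c, c' => by
      simp only [List.nil_append, sfRelW]
      constructor
      · intro h; exact ⟨c, rfl, h⟩
      · rintro ⟨d, rfl, h⟩; exact h
  | .act a :: u, v, c, c' => by
      simp only [List.cons_append, sfRelW, List.append_eq, sfRelW_append N u v]
      constructor
      · rintro ⟨d, hd, e, h1, h2⟩; exact ⟨e, ⟨d, hd, h1⟩, h2⟩
      · rintro ⟨e, ⟨d, hd, h1⟩, h2⟩; exact ⟨d, hd, e, h1, h2⟩
  | .test ψ :: u, v, c, c' => by
      simp only [List.cons_append, sfRelW, List.append_eq, sfRelW_append N u v]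
      tauto

theorem sfRel_iff_lang {P A : Type} (N : Kripke P A) :
    ∀ (π : SFProg P A) (c c' : Set N.S × N.S),
    sfRel N π c c' ↔ ∃ ω ∈ Lang π, sfRelW N ω c c'
  | .act a, c, c' => by
      simp only [sfRel, Lang, Set.mem_singleton_iff]
      constructor
      · rintro ⟨h1, h2⟩; exact ⟨[SFStep.act a], rfl, c', ⟨h1, h2⟩, rfl⟩
      · rintro ⟨ω, rfl, d, ⟨h1, h2⟩, rfl⟩; exact ⟨h1, h2⟩
  | .test ψ, c, c' => by
      simp only [sfRel, Lang, Set.mem_singleton_iff]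
      constructor
      · rintro ⟨rfl, h⟩; exact ⟨[SFStep.test ψ], rfl, h, rfl⟩
      · rintro ⟨ω, rfl, h, rfl⟩; exact ⟨rfl, h⟩
  | .seq π₁ π₂, c, c' => by
      simp only [sfRel, Lang, Set.mem_setOf_eq, sfRel_iff_lang N π₁, sfRel_iff_lang N π₂]
      constructor
      · rintro ⟨d, ⟨u, hu, h1⟩, v, hv, h2⟩
        exact ⟨u ++ v, ⟨u, hu, v, hv, rfl⟩, (sfRelW_append N u v c c').2 ⟨d, h1, h2⟩⟩
      · rintro ⟨ω, ⟨u, hu, v, hv, rfl⟩, h⟩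
        obtain ⟨d, h1, h2⟩ := (sfRelW_append N u v c c').1 h
        exact ⟨d, ⟨u, hu, h1⟩, v, hv, h2⟩
  | .choice π₁ π₂, c, c' => by
      simp only [sfRel, Lang, Set.mem_union, sfRel_iff_lang N π₁, sfRel_iff_lang N π₂]
      constructor
      · rintro (⟨ω, hω, h⟩ | ⟨ω, hω, h⟩)
        · exact ⟨ω, Or.inl hω, h⟩
        · exact ⟨ω, Or.inr hω, h⟩
      · rintro ⟨ω, hω | hω, h⟩
        · exact Or.inl ⟨ω, hω, h⟩
        · exact Or.inr ⟨ω, hω, h⟩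

theorem sfRelW_fst {P A : Type} (N : Kripke P A) :
    ∀ (ω : List (SFStep P A)) (c c' : Set N.S × N.S),
    sfRelW N ω c c' → c'.1 = N.updU c.1 (rActs ω)
  | [], c, c', h => by
      simp only [sfRelW] at h; subst h; rfl
  | .act a :: ω, c, c', h => by
      obtain ⟨d, ⟨hd, _⟩, h2⟩ := h
      have := sfRelW_fst N ω d c' h2
      simp only [rActs, List.filterMap_cons] at *
      simpa [Kripke.updU, ← hd] using this
  | .test ψ :: ω, c, c', h => by
      obtain ⟨_, h2⟩ := h
      have := sfRelW_fst N ω c c' h2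
      simpa [rActs, List.filterMap_cons] using this

mutual
theorem ctxA {P A : Type} (N : Kripke P A) (U : Set N.S) :
    ∀ (φ : SFForm P A) (σ : List A) (s : N.S),
    cSat N U σ s φ ↔ sfSat N (N.updU U σ) s φ
  | .top, σ, s => by simp [cSat, sfSat]
  | .atom p, σ, s => by simp [cSat, sfSat]
  | .neg φ, σ, s => by
      simp only [cSat, sfSat]
      exact not_congr (ctxA N U φ σ s)
  | .and φ ψ, σ, s => by
      simp only [cSat, sfSat]
      exact and_congr (ctxA N U φ σ s) (ctxA N U ψ σ s)
  | .know φ, σ, s => by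
      simp only [cSat, sfSat]
      exact forall₂_congr fun v _ => ctxA N U φ σ v
  | .box π φ, σ, s => by
      rw [cSat, sfSat]
      constructor
      · intro h c hc
        obtain ⟨ω, hω, hw⟩ := (sfRel_iff_lang N π _ c).1 hc
        have hfst : c.1 = N.updU U (σ ++ rActs ω) := by
          rw [updU_append]; exact sfRelW_fst N ω _ c hw
        have hw' : sfRelW N ω (N.updU U σ, s) (N.updU U (σ ++ rActs ω), c.2) := by
          rwa [← hfst]
        have hrel : cRel N U ω σ s c.2 :=
          (ctxB N U ω (sizeP π) (lang_size π ω hω) σ s c.2).2 hw'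
        have := (ctxA N U φ (σ ++ rActs ω) c.2).1 (h ω hω c.2 hrel)
        rwa [← hfst] at this
      · intro h ω hω t ht
        have hw := (ctxB N U ω (sizeP π) (lang_size π ω hω) σ s t).1 ht
        have hc : sfRel N π (N.updU U σ, s) (N.updU U (σ ++ rActs ω), t) :=
          (sfRel_iff_lang N π _ _).2 ⟨ω, hω, hw⟩
        exact (ctxA N U φ (σ ++ rActs ω) t).2 (h _ hc)

termination_by φ σ s => (2 * sizeF φ, 0)
decreasing_by
  all_goals apply Prod.Lex.left
  all_goals first
    | (simp only [sizeF]; omega)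
    | (have := sizeF_pos φ; simp only [sizeF]; omega)

theorem ctxB {P A : Type} (N : Kripke P A) (U : Set N.S) :
    ∀ (ω : List (SFStep P A)) (n : ℕ) (hn : sizeW ω ≤ n) (σ : List A) (s t : N.S),
    cRel N U ω σ s t ↔ sfRelW N ω (N.updU U σ, s) (N.updU U (σ ++ rActs ω), t)
  | [], n, hn, σ, s, t => by
      simp only [cRel, sfRelW, rActs, List.filterMap_nil, List.append_nil, Prod.ext_iff]
      tauto
  | .act a :: ω, n, hn, σ, s, t => by
      have hω : sizeW ω ≤ n := by
        simp only [sizeW, sizeStep, List.map_cons, List.sum_cons] at hn ⊢; omega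
      simp only [cRel, sfRelW]
      constructor
      · rintro ⟨s', h1, h2⟩
        refine ⟨(N.updU U (σ ++ [a]), s'), ⟨?_, h1⟩, ?_⟩
        · simp [updU_append, Kripke.updU]
        · have := (ctxB N U ω n hω (σ ++ [a]) s' t).1 h2
          simp only [rActs, List.filterMap_cons] at *
          simpa [List.append_assoc] using this
      · rintro ⟨d, ⟨hd1, hd2⟩, h2⟩
        refine ⟨d.2, hd2, ?_⟩
        have hd : d = (N.updU U (σ ++ [a]), d.2) := by
          rw [Prod.ext_iff]
          exact ⟨by simp [hd1, updU_append, Kripke.updU], rfl⟩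
        rw [hd] at h2
        refine (ctxB N U ω n hω (σ ++ [a]) d.2 t).2 ?_
        simp only [rActs, List.filterMap_cons] at h2 ⊢
        simpa [List.append_assoc] using h2
  | .test ψ :: ω, n, hn, σ, s, t => by
      have hω : sizeW ω ≤ n := by
        simp only [sizeW, sizeStep, List.map_cons, List.sum_cons] at hn ⊢; omega
      simp only [cRel, sfRelW]
      refine and_congr (ctxA N U ψ σ s) ?_
      rw [ctxB N U ω n hω σ s t]
      simp [rActs, List.filterMap_cons]
termination_by ω n hn σ s t => (2 * n + 1, sizeW ω)
decreasing_by
  all_goals simp_wf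
  all_goals first
    | (apply Prod.Lex.right'
       · omega
       · simp only [sizeW, sizeStep, List.map_cons, List.sum_cons]; omega)
    | (apply Prod.Lex.left
       have h2 : sizeW (SFStep.test ψ :: ω) = sizeF ψ + 1 + (List.map sizeStep ω).sum := by
         simp [sizeW, sizeStep, List.map_cons, List.sum_cons]
       omega)
end

/-- For every pointed uncertainty map M,s and every star-free EPDL
formula φ, M,s ⊨ φ iff M,s ⊩ φ, where ⊩ is the context-dependent semantics with
the empty context. -/
theorem standard_eq_context_pointed {P A : Type} [Countable P] [Countable A]
    (N : Kripke P A) (U : Set N.S) (hU : U.Nonempty) (s : N.S) (hs : s ∈ U)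
    (φ : SFForm P A) :
    sfSat N U s φ ↔ cSat N U [] s φ := by
  rw [ctxA N U φ [] s]
  rfl
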